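/- Let E be a row-finite graph and u, v ∈ E^0. If the ℤ-order-ideals ⟨u⟩ and ⟨v⟩ of M_E^{gr} have nonzero intersection, then u and v are downward directed: there exists w ∈ E^0 with a path from u to w and a path from v to w. -/

import Mathlib

set_option linter.unusedSectionVars false

/-- The algebraic preorder on a commutative monoid: `a ≤ b` iff `b = a + c` for some `c`. -/
def algLE {M : Type*} [AddCommMonoid M] (a b : M) : Prop := ∃ c, b = a + c

/-- A row-finite directed graph: vertices `V`, edges `Ed`, source `s`, range `r`,
and for each vertex the (finite) set of edges it emits. -/
structure RFGraph (V : Type) (Ed : Type) where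
  s : Ed → V
  r : Ed → V
  emit : V → Finset Ed
  mem_emit : ∀ e v, e ∈ emit v ↔ s e = v

namespace RFGraph

variable {V Ed : Type} [DecidableEq V] (G : RFGraph V Ed)

/-- The one-step rewriting relation `→₁` on the free commutative monoid `Multiset V`:
replace one occurrence of a non-sink vertex `v` by the sum of ranges of edges emitted by `v`. -/
def Step1 (a b : Multiset V) : Prop :=
  ∃ v : V, v ∈ a ∧ G.emit v ≠ ∅ ∧ b = a.erase v + (G.emit v).val.map G.r

/-- The reflexive-transitive closure `→` of `→₁`. -/
def Step : Multiset V → Multiset V → Prop := Relation.ReflTransGen G.Step1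

/-- The congruence on the free commutative monoid generated by `→₁`. -/
def gcon : AddCon (Multiset V) := addConGen G.Step1

/-- The graph monoid `M_E`. -/
def GM := G.gcon.Quotient

instance : AddCommMonoid G.GM := inferInstanceAs (AddCommMonoid G.gcon.Quotient)

/-- One-step rewriting for the talented monoid: replace `v(i)` by `Σ_{e ∈ s⁻¹(v)} r(e)(i+1)`. -/
def TStep1 (a b : Multiset (V × ℤ)) : Prop :=
  ∃ (v : V) (i : ℤ), (v, i) ∈ a ∧ G.emit v ≠ ∅ ∧
    b = a.erase (v, i) + (G.emit v).val.map (fun e => (G.r e, i + 1))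

/-- The congruence generated by the talented one-step relation. -/
def tcon : AddCon (Multiset (V × ℤ)) := addConGen G.TStep1

/-- The talented monoid `M_E^{gr}`. -/
def TM := G.tcon.Quotient

instance : AddCommMonoid G.TM := inferInstanceAs (AddCommMonoid G.tcon.Quotient)

/-- The generator `v(i)` of the talented monoid. -/
def tgen (v : V) (i : ℤ) : G.TM := G.tcon.mk' {(v, i)}

/-- The shift `v(i) ↦ v(i+n)` on the free commutative monoid `Multiset (V × ℤ)`. -/
def shiftMul (n : ℤ) : Multiset (V × ℤ) →+ Multiset (V × ℤ) where
  toFun a := a.map fun p => (p.1, p.2 + n)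
  map_zero' := rfl
  map_add' a b := Multiset.map_add (fun p => (p.1, p.2 + n)) a b

lemma shift_inj (n : ℤ) : Function.Injective (fun p : V × ℤ => (p.1, p.2 + n)) := by
  rintro ⟨a, b⟩ ⟨c, d⟩ h
  simp only [Prod.mk.injEq] at h
  exact Prod.ext h.1 (by omega)

lemma tstep1_shift (n : ℤ) {a b : Multiset (V × ℤ)} (h : G.TStep1 a b) :
    G.TStep1 (shiftMul n a) (shiftMul n b) := by
  obtain ⟨v, i, hv, hne, rfl⟩ := h
  refine ⟨v, i + n, Multiset.mem_map.2 ⟨(v, i), hv, rfl⟩, hne, ?_⟩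
  show Multiset.map _ _ = _
  rw [Multiset.map_add]
  congr 1
  · exact (Multiset.map_erase _ (shift_inj n) (v, i) a)
  · rw [Multiset.map_map]
    congr 1
    funext e
    simp only [Function.comp_apply]
    congr 1
    omega

lemma tcon_shift (n : ℤ) {a b : Multiset (V × ℤ)} (h : G.tcon a b) :
    G.tcon (shiftMul n a) (shiftMul n b) := by
  have hle : addConGen G.TStep1 ≤
      { r := fun a b => G.tcon (shiftMul n a) (shiftMul n b)
        iseqv := ⟨fun _ => G.tcon.refl _, fun h => G.tcon.symm h,
          fun h₁ h₂ => G.tcon.trans h₁ h₂⟩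
        add' := fun h₁ h₂ => by
          simpa only [map_add] using G.tcon.add h₁ h₂ } := by
    refine AddCon.addConGen_le.2 ?_
    intro x y hxy
    exact AddConGen.Rel.of _ _ (G.tstep1_shift n hxy)
  exact hle h

/-- The `ℤ`-action on the talented monoid, `ⁿ(v(i)) = v(i+n)`. -/
def tshift (n : ℤ) : G.TM →+ G.TM :=
  G.tcon.lift (G.tcon.mk'.comp (shiftMul n)) (by
    intro a b h
    show G.tcon.mk' (shiftMul n a) = G.tcon.mk' (shiftMul n b)
    exact (AddCon.eq _).2 (G.tcon_shift n h))

/-- Reachability: there is a (possibly trivial) path from `u` to `v`. -/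
def Reaches (u v : V) : Prop :=
  Relation.ReflTransGen (fun a b => ∃ e : Ed, G.s e = a ∧ G.r e = b) u v

/-- A cycle: a nonempty path of edges, closed up, with distinct source vertices. -/
def IsCycle (p : List Ed) : Prop :=
  ∃ h : p ≠ [], List.Chain' (fun e f => G.r e = G.s f) p ∧
    G.r (p.getLast h) = G.s (p.head h) ∧ (p.map G.s).Nodup

/-- The cycle `p` has an exit: some vertex on it emits an edge not on the cycle. -/
def HasExit (p : List Ed) : Prop :=
  ∃ e : Ed, (∃ f ∈ p, G.s e = G.s f) ∧ e ∉ p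

/-- The cycle `p` has no exit: every vertex on it emits exactly its cycle edge. -/
def NoExit (p : List Ed) : Prop :=
  ∀ e ∈ p, G.emit (G.s e) = {e}

/-- `ℤ`-order-ideals of the talented monoid. -/
def IsOrderIdeal (I : Set G.TM) : Prop :=
  (0 : G.TM) ∈ I ∧ (∀ a b : G.TM, a ∈ I → b ∈ I → a + b ∈ I) ∧
    (∀ (n : ℤ) (a : G.TM), a ∈ I → G.tshift n a ∈ I) ∧
    (∀ a b : G.TM, algLE a b → b ∈ I → a ∈ I)

/-- The smallest `ℤ`-order-ideal of `M_E^{gr}` containing `v(0)`. -/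
def genIdeal (v : V) : Set G.TM :=
  ⋂₀ {I : Set G.TM | G.IsOrderIdeal I ∧ G.tgen v 0 ∈ I}

/-- Minimality in the talented monoid: `0 ≠ b ≤ a` implies `a ≤ b`. -/
def TMin (a : G.TM) : Prop := ∀ b : G.TM, b ≠ 0 → algLE b a → algLE a b

/-- The covering graph `\bar E`. -/
def cover : RFGraph (V × ℤ) (Ed × ℤ) where
  s p := (G.s p.1, p.2)
  r p := (G.r p.1, p.2 + 1)
  emit p := (G.emit p.1).map ⟨fun e => (e, p.2), fun a b h => by
    simpa using congrArg Prod.fst h⟩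
  mem_emit := by
    rintro ⟨e, n⟩ ⟨v, m⟩
    simp only [Finset.mem_map, Function.Embedding.coeFn_mk, Prod.mk.injEq, G.mem_emit]
    constructor
    · rintro ⟨a, ha, rfl, rfl⟩; exact ⟨ha, rfl⟩
    · rintro ⟨rfl, rfl⟩
      first
        | exact ⟨e, (G.mem_emit e _).2 rfl, rfl⟩
        | exact ⟨e, rfl, rfl⟩
        | exact ⟨e, (G.mem_emit e _).2 rfl, rfl, rfl⟩

/-- The set of vertices on a cycle. -/
def cycVerts (p : List Ed) : Set V := {v | ∃ e ∈ p, G.s e = v}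

/-! ### Auxiliary development for the main theorem -/

/-- Reflexive–transitive closure of the talented one-step rewriting relation. -/
def TStepR : Multiset (V × ℤ) → Multiset (V × ℤ) → Prop := Relation.ReflTransGen G.TStep1

lemma tstep1_add_right {a b : Multiset (V × ℤ)} (h : G.TStep1 a b) (c : Multiset (V × ℤ)) :
    G.TStep1 (a + c) (b + c) := by
  obtain ⟨w, i, hw, hne, rfl⟩ := h
  refine ⟨w, i, Multiset.mem_add.2 (Or.inl hw), hne, ?_⟩
  rw [Multiset.erase_add_left_pos _ hw, add_right_comm]

lemma tstepR_add {a b c d : Multiset (V × ℤ)} (h1 : G.TStepR a b) (h2 : G.TStepR c d) :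
    G.TStepR (a + c) (b + d) := by
  have h1' : G.TStepR (a + c) (b + c) :=
    Relation.ReflTransGen.lift (· + c) (fun x y hxy => G.tstep1_add_right hxy c) _ _ h1
  have h2' : G.TStepR (b + c) (b + d) := by
    have := Relation.ReflTransGen.lift (· + b) (fun x y hxy => G.tstep1_add_right hxy b) _ _ h2
    simpa [add_comm, Function.onFun, TStepR] using this
  exact h1'.trans h2'

lemma tstep1_diamond {a b c : Multiset (V × ℤ)} (h1 : G.TStep1 a b) (h2 : G.TStep1 a c) :
    ∃ d, Relation.ReflGen G.TStep1 b d ∧ Relation.ReflTransGen G.TStep1 c d := by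
  obtain ⟨w, i, hw, hwne, rfl⟩ := h1
  obtain ⟨x, j, hx, hxne, rfl⟩ := h2
  by_cases hwx : (w, i) = (x, j)
  · have h1 : w = x := congrArg Prod.fst hwx
    have h2 : i = j := congrArg Prod.snd hwx
    subst h1; subst h2
    exact ⟨_, Relation.ReflGen.refl, Relation.ReflTransGen.refl⟩
  · have hx' : (x, j) ∈ a.erase (w, i) :=
      (Multiset.mem_erase_of_ne (fun hh => absurd hh.symm hwx)).2 hx
    have hw' : (w, i) ∈ a.erase (x, j) :=
      (Multiset.mem_erase_of_ne hwx).2 hw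
    refine ⟨((a.erase (w, i)).erase (x, j)) + (G.emit x).val.map (fun e => (G.r e, j + 1))
        + (G.emit w).val.map (fun e => (G.r e, i + 1)), Relation.ReflGen.single ?_,
        Relation.ReflTransGen.single ?_⟩
    · refine ⟨x, j, Multiset.mem_add.2 (Or.inl hx'), hxne, ?_⟩
      rw [Multiset.erase_add_left_pos _ hx', add_right_comm]
    · refine ⟨w, i, Multiset.mem_add.2 (Or.inl hw'), hwne, ?_⟩
      rw [Multiset.erase_add_left_pos _ hw', add_right_comm, Multiset.erase_comm, add_right_comm]

lemma tcon_join {a b : Multiset (V × ℤ)} (h : G.tcon a b) :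
    ∃ d, G.TStepR a d ∧ G.TStepR b d := by
  let J : AddCon (Multiset (V × ℤ)) :=
    { r := fun a b => ∃ d, G.TStepR a d ∧ G.TStepR b d
      iseqv := Relation.equivalence_join_reflTransGen
        (fun a b _ h1 h2 => G.tstep1_diamond h1 h2)
      add' := fun {w x y z} h1 h2 => by
        obtain ⟨d1, hw, hx⟩ := h1
        obtain ⟨d2, hy, hz⟩ := h2
        exact ⟨d1 + d2, G.tstepR_add hw hy, G.tstepR_add hx hz⟩ }
  have hle : G.tcon ≤ J :=
    AddCon.addConGen_le.2 fun _ y hxy =>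
      ⟨y, Relation.ReflTransGen.single hxy, Relation.ReflTransGen.refl⟩
  exact hle h

lemma tstepR_tcon {a b : Multiset (V × ℤ)} (h : G.TStepR a b) : G.tcon a b := by
  induction h with
  | refl => exact G.tcon.refl _
  | tail _ hbc ih => exact G.tcon.trans ih (AddConGen.Rel.of _ _ hbc)

/-- All vertices occurring in the multiset are reachable from `u`. -/
def Good (u : V) (a : Multiset (V × ℤ)) : Prop := ∀ p ∈ a, G.Reaches u p.1

lemma good_step1 {u : V} {a b : Multiset (V × ℤ)} (hg : G.Good u a) (h : G.TStep1 a b) :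
    G.Good u b := by
  obtain ⟨w, i, hw, hne, rfl⟩ := h
  intro p hp
  rcases Multiset.mem_add.1 hp with h1 | h2
  · exact hg p (Multiset.mem_of_mem_erase h1)
  · rcases Multiset.mem_map.1 h2 with ⟨e, he, rfl⟩
    exact (hg _ hw).tail ⟨e, (G.mem_emit e w).1 he, rfl⟩

lemma good_stepR {u : V} {a b : Multiset (V × ℤ)} (hg : G.Good u a) (h : G.TStepR a b) :
    G.Good u b := by
  induction h with
  | refl => exact hg
  | tail _ hbc ih => exact G.good_step1 ih hbc

lemma tstepR_add_decomp {a c d : Multiset (V × ℤ)} (h : G.TStepR (a + c) d) :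
    ∃ d₁ d₂, d = d₁ + d₂ ∧ G.TStepR a d₁ ∧ G.TStepR c d₂ := by
  induction h with
  | refl => exact ⟨a, c, rfl, Relation.ReflTransGen.refl, Relation.ReflTransGen.refl⟩
  | tail _ hbc ih =>
    obtain ⟨d₁, d₂, rfl, h1, h2⟩ := ih
    obtain ⟨w, i, hw, hne, rfl⟩ := hbc
    rcases Multiset.mem_add.1 hw with hw1 | hw2
    · refine ⟨d₁.erase (w, i) + (G.emit w).val.map (fun e => (G.r e, i + 1)), d₂, ?_,
        h1.tail ⟨w, i, hw1, hne, rfl⟩, h2⟩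
      rw [Multiset.erase_add_left_pos _ hw1, add_right_comm]
    · refine ⟨d₁, d₂.erase (w, i) + (G.emit w).val.map (fun e => (G.r e, i + 1)), ?_,
        h1, h2.tail ⟨w, i, hw2, hne, rfl⟩⟩
      rw [Multiset.erase_add_right_pos _ hw2, add_assoc]

/-- The concrete candidate for the ideal generated by `u(0)`. -/
def reachIdeal (u : V) : Set G.TM := {x | ∃ a, x = G.tcon.mk' a ∧ G.Good u a}

lemma reachIdeal_isOrderIdeal (u : V) : G.IsOrderIdeal (G.reachIdeal u) := by
  refine ⟨⟨0, (map_zero _).symm, fun p hp => absurd hp (Multiset.notMem_zero p)⟩,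
    ?_, ?_, ?_⟩
  · rintro _ _ ⟨a, rfl, ha⟩ ⟨b, rfl, hb⟩
    refine ⟨a + b, (map_add _ _ _).symm, fun p hp => ?_⟩
    rcases Multiset.mem_add.1 hp with h | h
    · exact ha p h
    · exact hb p h
  · rintro n _ ⟨a, rfl, ha⟩
    refine ⟨shiftMul n a, ?_, fun p hp => ?_⟩
    · rfl
    · rcases Multiset.mem_map.1 hp with ⟨q, hq, rfl⟩
      exact ha q hq
  · rintro x _ ⟨c, hc⟩ ⟨b, rfl, hb⟩
    obtain ⟨a₀, rfl⟩ := AddCon.mk'_surjective x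
    obtain ⟨c₀, rfl⟩ := AddCon.mk'_surjective c
    have hcon : G.tcon (a₀ + c₀) b := by
      refine (AddCon.eq _).1 ?_
      show G.tcon.mk' (a₀ + c₀) = G.tcon.mk' b
      rw [map_add]
      exact hc.symm
    obtain ⟨d, hd1, hd2⟩ := G.tcon_join hcon
    obtain ⟨d₁, d₂, rfl, hdd1, _⟩ := G.tstepR_add_decomp hd1
    have hgood : G.Good u (d₁ + d₂) := G.good_stepR hb hd2
    have ha₀d : G.tcon a₀ d₁ := G.tstepR_tcon hdd1
    exact ⟨d₁, (AddCon.eq _).2 ha₀d, fun p hp => hgood p (Multiset.mem_add.2 (Or.inl hp))⟩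

lemma tgen_mem_reachIdeal (u : V) : G.tgen u 0 ∈ G.reachIdeal u := by
  refine ⟨{(u, 0)}, rfl, fun p hp => ?_⟩
  rw [Multiset.mem_singleton] at hp
  subst hp
  exact Relation.ReflTransGen.refl

lemma genIdeal_subset_reachIdeal (u : V) : G.genIdeal u ⊆ G.reachIdeal u := fun x hx =>
  hx (G.reachIdeal u) ⟨G.reachIdeal_isOrderIdeal u, G.tgen_mem_reachIdeal u⟩

end RFGraph

/-- If the `ℤ`-order-ideals `⟨u⟩` and `⟨v⟩` of `M_E^{gr}` have nonzero intersection,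
then `u` and `v` are downward directed. -/
theorem ideals_downward_directed {V Ed : Type} [DecidableEq V] (G : RFGraph V Ed)
    (u v : V)
    (h : ∃ x : G.TM, x ≠ 0 ∧ x ∈ G.genIdeal u ∧ x ∈ G.genIdeal v) :
    ∃ w : V, G.Reaches u w ∧ G.Reaches v w := by
  obtain ⟨x, hx0, hxu, hxv⟩ := h
  obtain ⟨a, rfl, ha⟩ := G.genIdeal_subset_reachIdeal u hxu
  obtain ⟨b, hab, hb⟩ := G.genIdeal_subset_reachIdeal v hxv
  have hcon : G.tcon a b := (AddCon.eq _).1 hab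
  obtain ⟨d, hd1, hd2⟩ := G.tcon_join hcon
  have hgu : G.Good u d := G.good_stepR ha hd1
  have hgv : G.Good v d := G.good_stepR hb hd2
  have hd0 : d ≠ 0 := by
    intro hdeq
    apply hx0
    have := (AddCon.eq _).2 (G.tstepR_tcon hd1)
    rw [hdeq] at this
    exact this
  obtain ⟨p, hp⟩ := Multiset.exists_mem_of_ne_zero hd0
  exact ⟨p.1, hgu p hp, hgv p hp⟩
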